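/- Every element x of the additive submonoid generated by { t_k(a,b,c) : k ∈ ℕ } can be written as x = Σ_{i ∈ K̃} j̃_i · t_i(a,b,c) for some a-reduced family { j̃_i }_{i ∈ K̃} of integers indexed over a finite subset K̃ of ℕ. -/

import Mathlib

/-- `sF a k = Σ_{i=0}^{k-1} a^i` (so `sF a 0 = 0`). -/
def sF (a k : ℕ) : ℕ := ∑ i ∈ Finset.range k, a ^ i

/-- `tF a b c k = a^k * c + b * sF a k`. -/
def tF (a b c k : ℕ) : ℕ := a ^ k * c + b * sF a k

/-- A θ_{a,b}-semigroup: contains 0, closed under addition, and closed under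
`x ↦ a*x + b` on nonzero elements. -/
def IsThetaSG (a b : ℕ) (S : Set ℕ) : Prop :=
  0 ∈ S ∧ (∀ x ∈ S, ∀ y ∈ S, x + y ∈ S) ∧ ∀ y ∈ S, y ≠ 0 → a * y + b ∈ S

/-- `Gset a b c` : the smallest θ_{a,b}-semigroup containing `c`. -/
def Gset (a b c : ℕ) : Set ℕ := ⋂₀ {S : Set ℕ | IsThetaSG a b S ∧ c ∈ S}

/-- `Hmon a b c` : additive submonoid generated by the `tF a b c k`. -/
def Hmon (a b c : ℕ) : AddSubmonoid ℕ :=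
  AddSubmonoid.closure {x | ∃ k, x = tF a b c k}

/-- `{j_i}_{i=1}^k` is `a`-reduced. -/
def AReduced (a k : ℕ) (j : ℕ → ℕ) : Prop :=
  (∀ i, 1 ≤ i → i ≤ k → j i ≤ a) ∧ j k ≠ 0 ∧
  ∀ m, 1 ≤ m → m ≤ k → j m = a → ∀ i, 1 ≤ i → i < m → j i = 0

lemma sF_succ (a k : ℕ) : sF a (k + 1) = a * sF a k + 1 := by
  simp only [sF, Finset.sum_range_succ', pow_succ, pow_zero]
  rw [← Finset.sum_mul, mul_comm]

lemma tF_succ (a b c k : ℕ) : tF a b c (k + 1) = a * tF a b c k + b := by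
  simp only [tF, sF_succ, pow_succ]; ring

lemma tF_key (a b c m s : ℕ) (hs : 1 ≤ s) :
    a * tF a b c m + tF a b c s = tF a b c (m + 1) + a * tF a b c (s - 1) := by
  obtain ⟨s', rfl⟩ : ∃ s', s = s' + 1 := ⟨s - 1, by omega⟩
  simp only [tF_succ, Nat.add_sub_cancel]; ring

/-- sum of `tF` over the "added" / "removed" blocks. -/
lemma block_sum (a b c n k m : ℕ) :
    ((Multiset.replicate n k + {m}).map (tF a b c)).sum
      = n * tF a b c k + tF a b c m := by
  simp [Multiset.sum_replicate]

lemma reduce_ge2 (a b c : ℕ) (ha : 2 ≤ a) :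
    ∀ n (M : Multiset ℕ), M ≠ 0 → M.sum ≤ n →
    ∃ M' : Multiset ℕ, M' ≠ 0 ∧
      ((M'.map (tF a b c)).sum = (M.map (tF a b c)).sum) ∧
      (∀ m, 1 ≤ m → M'.count m ≤ a) ∧
      (∀ m, 1 ≤ m → M'.count m = a → ∀ i, 1 ≤ i → i < m → M'.count i = 0) := by
  intro n
  induction n with
  | zero =>
    intro M hM hsum
    refine ⟨M, hM, rfl, ?_, ?_⟩
    · intro m hm
      by_contra h
      have hmem : m ∈ M := Multiset.count_pos.mp (by omega)
      have := Multiset.le_sum_of_mem hmem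
      omega
    · intro m hm hcount i hi him
      have hmem : m ∈ M := Multiset.count_pos.mp (by omega)
      have := Multiset.le_sum_of_mem hmem
      omega
  | succ n ih =>
    intro M hM hsum
    by_cases hmove : ∃ m s, 1 ≤ s ∧ s ≤ m ∧ Multiset.replicate a m + {s} ≤ M
    · obtain ⟨m, s, hs1, hsm, hle⟩ := hmove
      set R : Multiset ℕ := Multiset.replicate a m + {s} with hR
      set A : Multiset ℕ := Multiset.replicate a (s - 1) + {m + 1} with hA
      set N : Multiset ℕ := (M - R) + A with hN
      have hMsplit : (M - R) + R = M := tsub_add_cancel_of_le hle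
      have hRsum : R.sum = a * m + s := by
        simp [hR, Multiset.sum_replicate]
      have hAsum : A.sum = a * (s - 1) + (m + 1) := by
        simp [hA, Multiset.sum_replicate]
      have hAltR : A.sum < R.sum := by
        rw [hRsum, hAsum]
        have h1 : a * (s - 1) + a = a * s := by
          have h2 : s - 1 + 1 = s := by omega
          calc a * (s - 1) + a = a * (s - 1 + 1) := by ring
          _ = a * s := by rw [h2]
        nlinarith [Nat.mul_le_mul_left a hsm]
      have hMsum : M.sum = (M - R).sum + R.sum := by
        conv_lhs => rw [← hMsplit]
        rw [Multiset.sum_add]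
      have hNsum : N.sum < M.sum := by
        rw [hN, Multiset.sum_add, hMsum]
        omega
      have hNne : N ≠ 0 := by
        intro h
        have hmem : (m + 1) ∈ N := by
          simp [hN, hA]
        rw [h] at hmem
        exact absurd hmem (Multiset.notMem_zero _)
      obtain ⟨M', hM'ne, hM'sum, hM'le, hM'red⟩ := ih N hNne (by omega)
      refine ⟨M', hM'ne, ?_, hM'le, hM'red⟩
      rw [hM'sum]
      have hA' : (A.map (tF a b c)).sum = a * tF a b c (s - 1) + tF a b c (m + 1) :=
        block_sum a b c a (s - 1) (m + 1)
      have hR' : (R.map (tF a b c)).sum = a * tF a b c m + tF a b c s :=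
        block_sum a b c a m s
      have hMmap : (M.map (tF a b c)).sum
          = ((M - R).map (tF a b c)).sum + (R.map (tF a b c)).sum := by
        conv_lhs => rw [← hMsplit]
        rw [Multiset.map_add, Multiset.sum_add]
      rw [hN, Multiset.map_add, Multiset.sum_add, hMmap, hA', hR',
        tF_key a b c m s hs1]
      ring
    · push_neg at hmove
      refine ⟨M, hM, rfl, ?_, ?_⟩
      · intro m hm
        by_contra h
        push_neg at h
        apply hmove m m hm le_rfl
        refine Multiset.le_iff_count.mpr (fun k => ?_)
        rw [Multiset.count_add, Multiset.count_replicate, Multiset.count_singleton]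
        rcases eq_or_ne m k with rfl | h1
        · rw [if_pos rfl, if_pos rfl]; omega
        · rw [if_neg h1, if_neg (Ne.symm h1)]; simp
      · intro m hm hcount i hi him
        by_contra h
        apply hmove m i hi (by omega)
        refine Multiset.le_iff_count.mpr (fun k => ?_)
        rw [Multiset.count_add, Multiset.count_replicate, Multiset.count_singleton]
        have him' : i ≠ m := by omega
        rcases eq_or_ne m k with rfl | h1
        · rw [if_pos rfl, if_neg (by omega : ¬ m = i)]
          omega
        · rw [if_neg h1]
          rcases eq_or_ne k i with rfl | h2
          · rw [if_pos rfl]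
            omega
          · rw [if_neg h2]
            simp

lemma tF_one (b c k : ℕ) : tF 1 b c k = c + b * k := by
  simp [tF, sF]

lemma map_sum_one (b c : ℕ) (M : Multiset ℕ) :
    (M.map (tF 1 b c)).sum = Multiset.card M * c + b * M.sum := by
  induction M using Multiset.induction with
  | empty => simp
  | cons y s ihs =>
    rw [Multiset.map_cons, Multiset.sum_cons, ihs, tF_one, Multiset.card_cons,
      Multiset.sum_cons]
    ring

lemma reduce_one (b c : ℕ) (M : Multiset ℕ) (hM : M ≠ 0) :
    ∃ M' : Multiset ℕ, M' ≠ 0 ∧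
      ((M'.map (tF 1 b c)).sum = (M.map (tF 1 b c)).sum) ∧
      (∀ m, 1 ≤ m → M'.count m ≤ 1) ∧
      (∀ m, 1 ≤ m → M'.count m = 1 → ∀ i, 1 ≤ i → i < m → M'.count i = 0) := by
  have hcard : 1 ≤ Multiset.card M := Multiset.card_pos.mpr hM
  set M' : Multiset ℕ := Multiset.replicate (Multiset.card M - 1) 0 + {M.sum} with hM'
  have hne : M' ≠ 0 := by
    intro h
    have hmem : M.sum ∈ M' := by simp [hM']
    rw [h] at hmem
    exact absurd hmem (Multiset.notMem_zero _)
  refine ⟨M', hne, ?_, ?_, ?_⟩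
  · rw [map_sum_one, map_sum_one]
    have h1 : Multiset.card M' = Multiset.card M := by
      simp [hM']
      omega
    have h2 : M'.sum = M.sum := by
      simp [hM', Multiset.sum_replicate]
    rw [h1, h2]
  · intro m hm
    rw [hM', Multiset.count_add, Multiset.count_replicate, Multiset.count_singleton]
    rw [if_neg (by omega : ¬ (0:ℕ) = m)]
    split <;> omega
  · intro m hm hcount i hi him
    rw [hM', Multiset.count_add, Multiset.count_replicate, Multiset.count_singleton]
      at hcount ⊢
    rw [if_neg (by omega : ¬ (0:ℕ) = m)] at hcount
    have hms : m = M.sum := by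
      by_cases h : m = M.sum
      · exact h
      · rw [if_neg h] at hcount; omega
    rw [if_neg (by omega : ¬ (0:ℕ) = i), if_neg (by omega : ¬ i = M.sum)]

theorem stmt11 (a b c : ℕ) (ha : 0 < a) (hb : 0 < b) (hc : 2 ≤ c)
    (x : ℕ) (hx : x ∈ Hmon a b c) (h0 : x ≠ 0) :
    ∃ (K : Finset ℕ) (hK : K.Nonempty) (j : ℕ → ℕ),
      (∀ i ∈ K, i ≠ 0 → j i ≤ a) ∧ j (K.max' hK) ≠ 0 ∧
      (∀ m ∈ K, m ≠ 0 → j m = a → ∀ i ∈ K, i ≠ 0 → i < m → j i = 0) ∧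
      x = ∑ i ∈ K, j i * tF a b c i := by
  obtain ⟨l, hl, hlsum⟩ := AddSubmonoid.exists_list_of_mem_closure hx
  have hind : ∃ M : Multiset ℕ, (M.map (tF a b c)).sum = l.sum := by
    clear hlsum
    induction l with
    | nil => exact ⟨0, by simp⟩
    | cons y l ihl =>
      obtain ⟨M, hMs⟩ := ihl (fun z hz => hl z (List.mem_cons_of_mem _ hz))
      obtain ⟨k, hk⟩ := hl y List.mem_cons_self
      exact ⟨k ::ₘ M, by simp [hMs, hk]⟩
  obtain ⟨M, hMs⟩ := hind
  rw [hlsum] at hMs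
  have hMne : M ≠ 0 := by
    rintro rfl
    simp at hMs
    exact h0 hMs.symm
  have hred : ∃ M' : Multiset ℕ, M' ≠ 0 ∧
      ((M'.map (tF a b c)).sum = (M.map (tF a b c)).sum) ∧
      (∀ m, 1 ≤ m → M'.count m ≤ a) ∧
      (∀ m, 1 ≤ m → M'.count m = a → ∀ i, 1 ≤ i → i < m → M'.count i = 0) := by
    rcases eq_or_lt_of_le (show 1 ≤ a from ha) with h1 | h2
    · rw [← h1] at *
      exact reduce_one b c M hMne
    · exact reduce_ge2 a b c h2 M.sum M hMne le_rfl
  obtain ⟨M', hM'ne, hM'sum, hM'le, hM'red⟩ := hred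
  refine ⟨insert 0 M'.toFinset, ⟨0, Finset.mem_insert_self _ _⟩,
    fun i => M'.count i, ?_, ?_, ?_, ?_⟩
  · intro i _ hi
    exact hM'le i (by omega)
  · set K := insert 0 M'.toFinset with hK
    set m := K.max' ⟨0, Finset.mem_insert_self _ _⟩ with hm
    have hmK : m ∈ K := Finset.max'_mem _ _
    rcases Finset.mem_insert.mp hmK with h | h
    · obtain ⟨y, hy⟩ := Multiset.exists_mem_of_ne_zero hM'ne
      have hyK : y ∈ K := Finset.mem_insert_of_mem (Multiset.mem_toFinset.mpr hy)
      have hym : y ≤ m := Finset.le_max' _ _ hyK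
      have hy0 : y = 0 := by omega
      have hpos := Multiset.count_pos.mpr hy
      rw [hy0, ← h] at hpos
      show Multiset.count m M' ≠ 0
      omega
    · have hpos := Multiset.count_pos.mpr (Multiset.mem_toFinset.mp h)
      show Multiset.count m M' ≠ 0
      omega
  · intro m _ hm hcount i _ hi him
    exact hM'red m (by omega) hcount i (by omega) him
  · rw [← hMs, ← hM'sum, Finset.sum_multiset_map_count]
    simp only [smul_eq_mul]
    by_cases h : 0 ∈ M'.toFinset
    · rw [Finset.insert_eq_self.mpr h]
    · rw [Finset.sum_insert h]
      have hz : M'.count 0 = 0 :=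
        Multiset.count_eq_zero.mpr (fun hc => h (Multiset.mem_toFinset.mpr hc))
      rw [hz]
      simp
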